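/- Let f : (a,b) → ℝ be differentiable and uniformly convex with modulus Φ : [0,b-a] → ℝ≥0. Let x₁,...,xₙ ∈ (a,b), a₁,...,aₙ ≥ 0 with Aₙ = ∑aᵢ > 0 and x̄ = (1/Aₙ)∑aᵢxᵢ. Then (1/Aₙ)∑ aᵢ f(xᵢ) - f(x̄) ≤ (1/Aₙ)∑ aᵢ f'(xᵢ)(xᵢ - x̄) - (1/Aₙ)∑ aᵢ Φ(|x̄ - xᵢ|). -/
import Mathlib


/-- converse Jensen inequality for uniformly convex functions. -/
theorem stmt8 (a b : ℝ) (hab : a < b) (f f' Φ : ℝ → ℝ)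
    (hf : ∀ x ∈ Set.Ioo a b, HasDerivAt f (f' x) x)
    (hΦnn : ∀ t ∈ Set.Icc 0 (b - a), 0 ≤ Φ t)
    (huc : ∀ x ∈ Set.Ioo a b, ∀ y ∈ Set.Ioo a b,
      f y + f' y * (x - y) + Φ |x - y| ≤ f x)
    (n : ℕ) (hn : 0 < n) (w x : ℕ → ℝ) (A xbar : ℝ)
    (hA : A = ∑ i ∈ Finset.range n, w i) (hApos : 0 < A)
    (hw : ∀ i < n, 0 ≤ w i)
    (hx : ∀ i < n, x i ∈ Set.Ioo a b)
    (hxbar : xbar = (1 / A) * ∑ i ∈ Finset.range n, w i * x i) :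
    (1 / A) * ∑ i ∈ Finset.range n, w i * f (x i) - f xbar ≤
      (1 / A) * ∑ i ∈ Finset.range n, w i * (f' (x i) * (x i - xbar)) -
        (1 / A) * ∑ i ∈ Finset.range n, w i * Φ |xbar - x i| := by
  -- there is a positive weight
  obtain ⟨i0, hi0mem, hi0⟩ : ∃ i ∈ Finset.range n, w i ≠ 0 := by
    apply Finset.exists_ne_zero_of_sum_ne_zero
    rw [← hA]; exact ne_of_gt hApos
  have hi0n : i0 < n := Finset.mem_range.mp hi0mem
  have hw0 : 0 < w i0 := lt_of_le_of_ne (hw i0 hi0n) (Ne.symm hi0)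
  -- xbar is in (a,b)
  have hlow : a * A < ∑ i ∈ Finset.range n, w i * x i := by
    have : ∑ i ∈ Finset.range n, w i * a < ∑ i ∈ Finset.range n, w i * x i := by
      apply Finset.sum_lt_sum
      · intro i hi
        exact mul_le_mul_of_nonneg_left (le_of_lt (hx i (Finset.mem_range.mp hi)).1)
          (hw i (Finset.mem_range.mp hi))
      · exact ⟨i0, hi0mem, by
          exact mul_lt_mul_of_pos_left (hx i0 hi0n).1 hw0⟩
    calc a * A = ∑ i ∈ Finset.range n, w i * a := by
          simp [hA, Finset.mul_sum, mul_comm]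
      _ < _ := this
  have hhigh : ∑ i ∈ Finset.range n, w i * x i < b * A := by
    have : ∑ i ∈ Finset.range n, w i * x i < ∑ i ∈ Finset.range n, w i * b := by
      apply Finset.sum_lt_sum
      · intro i hi
        exact mul_le_mul_of_nonneg_left (le_of_lt (hx i (Finset.mem_range.mp hi)).2)
          (hw i (Finset.mem_range.mp hi))
      · exact ⟨i0, hi0mem, mul_lt_mul_of_pos_left (hx i0 hi0n).2 hw0⟩
    calc ∑ i ∈ Finset.range n, w i * x i < ∑ i ∈ Finset.range n, w i * b := this
      _ = b * A := by simp [hA, Finset.mul_sum, mul_comm]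
  have hAne : A ≠ 0 := ne_of_gt hApos
  have hxbarmem : xbar ∈ Set.Ioo a b := by
    constructor
    · rw [hxbar]
      have : (1 / A) * (a * A) < (1 / A) * ∑ i ∈ Finset.range n, w i * x i :=
        mul_lt_mul_of_pos_left hlow (one_div_pos.mpr hApos)
      calc a = (1 / A) * (a * A) := by field_simp
        _ < _ := this
    · rw [hxbar]
      have : (1 / A) * ∑ i ∈ Finset.range n, w i * x i < (1 / A) * (b * A) :=
        mul_lt_mul_of_pos_left hhigh (one_div_pos.mpr hApos)
      calc (1 / A) * ∑ i ∈ Finset.range n, w i * x i < (1 / A) * (b * A) := this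
        _ = b := by field_simp
  -- key summed inequality
  have key : (∑ i ∈ Finset.range n, w i * f (x i))
      - (∑ i ∈ Finset.range n, w i * (f' (x i) * (x i - xbar)))
      + (∑ i ∈ Finset.range n, w i * Φ |xbar - x i|) ≤ A * f xbar := by
    have hAf : A * f xbar = ∑ i ∈ Finset.range n, w i * f xbar := by
      rw [hA, Finset.sum_mul]
    rw [hAf, ← Finset.sum_sub_distrib, ← Finset.sum_add_distrib]
    apply Finset.sum_le_sum
    intro i hi
    have hin := Finset.mem_range.mp hi
    have h := huc xbar hxbarmem (x i) (hx i hin)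
    have hwnn := hw i hin
    nlinarith [h, hwnn]
  have h := mul_le_mul_of_nonneg_left key (le_of_lt (one_div_pos.mpr hApos))
  have hAA : (1 / A) * (A * f xbar) = f xbar := by field_simp
  rw [hAA] at h
  rw [mul_add, mul_sub] at h
  linarith
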